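/- Assume a ≠ 0 and let U ⊆ {y ≠ 0} ⊂ ℝ⁴ be the open set where K_KK − 12aμx − 18μp_y²/y² − 9μ²/y⁴ > 0, and on U set Δ = √(K_KK − 12aμx − 18μp_y²/y² − 9μ²/y⁴), u₁ = −2a·x − 3p_y²/y² + Δ/y², u₂ = −2a·x − 3p_y²/y² − Δ/y², and v_i = −p_x/(4a) − (p_y/(4a²y))·(u_i − 4a·x − 3ω) for i = 1,2. Then the canonical Poisson bracket relations {u₁,u₂}₀ = 0, {v₁,v₂}₀ = 0, {u_i,v_j}₀ = δ_{ij} (i,j = 1,2) hold at every point of U; that is, (v₁,u₁,v₂,u₂) are canonical separated variables for the Kaup–Kupershmidt system. -/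

import Mathlib

/-- Canonical Poisson bracket on ℝ⁴ with coordinates `(p_x, p_y, x, y)`. -/
noncomputable def pbracket (f g : ℝ → ℝ → ℝ → ℝ → ℝ) (px py x y : ℝ) : ℝ :=
    (deriv (fun t => f px py t y) x) * (deriv (fun t => g t py x y) px)
  - (deriv (fun t => f t py x y) px) * (deriv (fun t => g px py t y) x)
  + (deriv (fun t => f px py x t) y) * (deriv (fun t => g px t x y) py)
  - (deriv (fun t => f px t x y) py) * (deriv (fun t => g px py x t) y)

/-- The Kaup–Kupershmidt quartic integral. -/
noncomputable def KKK (a ω μ : ℝ) (px py x y : ℝ) : ℝ :=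
  9*(ω*y^2 + py^2 + μ/y^2)^2 + 12*a*py*y^2*(3*x*py - y*px)
    - 2*a^2*y^4*(6*x^2 + y^2) + 12*a*x*(μ - ω*y^4) - 18*ω*μ

/-- The radicand `K_KK − 12aμx − 18μp_y²/y² − 9μ²/y⁴`. -/
noncomputable def radKK (a ω μ : ℝ) (px py x y : ℝ) : ℝ :=
  KKK a ω μ px py x y - 12*a*μ*x - 18*μ*py^2/y^2 - 9*μ^2/y^4

/-- The separating coordinate `u₁ = −2ax − 3p_y²/y² + Δ/y²`, `Δ = √(radKK)`. -/
noncomputable def u1KK (a ω μ : ℝ) (px py x y : ℝ) : ℝ :=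
  -2*a*x - 3*py^2/y^2 + Real.sqrt (radKK a ω μ px py x y) / y^2

/-- The separating coordinate `u₂ = −2ax − 3p_y²/y² − Δ/y²`. -/
noncomputable def u2KK (a ω μ : ℝ) (px py x y : ℝ) : ℝ :=
  -2*a*x - 3*py^2/y^2 - Real.sqrt (radKK a ω μ px py x y) / y^2

/-- The conjugate momentum `v₁ = −p_x/(4a) − (p_y/(4a²y))(u₁ − 4ax − 3ω)`. -/
noncomputable def v1KK (a ω μ : ℝ) (px py x y : ℝ) : ℝ :=
  -px/(4*a) - (py/(4*a^2*y)) * (u1KK a ω μ px py x y - 4*a*x - 3*ω)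

/-- The conjugate momentum `v₂ = −p_x/(4a) − (p_y/(4a²y))(u₂ − 4ax − 3ω)`. -/
noncomputable def v2KK (a ω μ : ℝ) (px py x y : ℝ) : ℝ :=
  -px/(4*a) - (py/(4*a^2*y)) * (u2KK a ω μ px py x y - 4*a*x - 3*ω)

private theorem hd_congr {f : ℝ → ℝ} {d pt : ℝ} (h : HasDerivAt f d pt) {d' : ℝ}
    (e : d = d') : HasDerivAt f d' pt := e ▸ h

private theorem KKpoly1 (c0 c1 pt : ℝ) : HasDerivAt (fun t => c0 + c1*t) c1 pt :=
  hd_congr (((hasDerivAt_id' pt).const_mul c1).const_add c0) (by ring)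

private theorem KKpoly2 (c0 c1 c2 pt : ℝ) :
    HasDerivAt (fun t => c0 + c1*t + c2*(t*t)) (c1 + 2*c2*pt) pt :=
  hd_congr ((((hasDerivAt_id' pt).const_mul c1).const_add c0).add
    (((hasDerivAt_id' pt).mul (hasDerivAt_id' pt)).const_mul c2)) (by ring)

private theorem KKpoly4 (c0 c1 c2 c4 pt : ℝ) :
    HasDerivAt (fun t => c0 + c1*t + c2*(t*t) + c4*(t*t*t*t))
      (c1 + 2*c2*pt + 4*c4*(pt*pt*pt)) pt :=
  hd_congr (((((hasDerivAt_id' pt).const_mul c1).const_add c0).add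
    (((hasDerivAt_id' pt).mul (hasDerivAt_id' pt)).const_mul c2)).add
    (((((hasDerivAt_id' pt).mul (hasDerivAt_id' pt)).mul (hasDerivAt_id' pt)).mul
      (hasDerivAt_id' pt)).const_mul c4)) (by simp only [Pi.mul_apply]; ring)

private theorem KKpoly6 (c0 c2 c3 c4 c6 pt : ℝ) :
    HasDerivAt (fun t => c0 + c2*(t*t) + c3*(t*t*t) + c4*(t*t*t*t) + c6*(t*t*t*t*t*t))
      (2*c2*pt + 3*c3*(pt*pt) + 4*c4*(pt*pt*pt) + 6*c6*(pt*pt*pt*pt*pt)) pt :=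
  hd_congr (((((((hasDerivAt_id' pt).mul (hasDerivAt_id' pt)).const_mul c2).const_add c0).add
    ((((hasDerivAt_id' pt).mul (hasDerivAt_id' pt)).mul (hasDerivAt_id' pt)).const_mul c3)).add
    (((((hasDerivAt_id' pt).mul (hasDerivAt_id' pt)).mul (hasDerivAt_id' pt)).mul
      (hasDerivAt_id' pt)).const_mul c4)).add
    (((((((hasDerivAt_id' pt).mul (hasDerivAt_id' pt)).mul (hasDerivAt_id' pt)).mul
      (hasDerivAt_id' pt)).mul (hasDerivAt_id' pt)).mul (hasDerivAt_id' pt)).const_mul c6)) (by simp only [Pi.mul_apply]; ring)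

private theorem KKlin (F : ℝ → ℝ) (R' pt c0 c1 k : ℝ) (hF : HasDerivAt F R' pt)
    (h0 : F pt ≠ 0) :
    HasDerivAt (fun t => c0 + c1*t + k*Real.sqrt (F t))
      (c1 + k*(R'/(2*Real.sqrt (F pt)))) pt :=
  hd_congr ((((hasDerivAt_id' pt).const_mul c1).const_add c0).add
    ((hF.sqrt h0).const_mul k)) (by ring)

private theorem KKpy (F : ℝ → ℝ) (R' pt c0 c1 c2 c3 k0 k1 : ℝ) (hF : HasDerivAt F R' pt)
    (h0 : F pt ≠ 0) :
    HasDerivAt (fun t => c0 + c1*t + c2*(t*t) + c3*(t*t*t) + (k0 + k1*t)*Real.sqrt (F t))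
      (c1 + 2*c2*pt + 3*c3*(pt*pt) + (k1*Real.sqrt (F pt)
        + (k0 + k1*pt)*(R'/(2*Real.sqrt (F pt))))) pt :=
  hd_congr ((((((hasDerivAt_id' pt).const_mul c1).const_add c0).add
    (((hasDerivAt_id' pt).mul (hasDerivAt_id' pt)).const_mul c2)).add
    ((((hasDerivAt_id' pt).mul (hasDerivAt_id' pt)).mul (hasDerivAt_id' pt)).const_mul c3)).add
    ((((hasDerivAt_id' pt).const_mul k1).const_add k0).mul (hF.sqrt h0))) (by simp only [Pi.mul_apply]; ring)

private theorem KKy (F : ℝ → ℝ) (R' pt c0 c1 c2 c3 k2 k3 : ℝ) (hF : HasDerivAt F R' pt)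
    (h0 : F pt ≠ 0) (hs0 : Real.sqrt (F pt) ≠ 0) (hpt : pt ≠ 0) :
    HasDerivAt (fun t => c0 + c1/t + c2/(t*t) + c3/(t*t*t)
        + (k2/(t*t) + k3/(t*t*t))*Real.sqrt (F t))
      (-(c1/(pt*pt)) + -(2*c2/(pt*pt*pt)) + -(3*c3/(pt*pt*pt*pt))
        + ((-(2*k2/(pt*pt*pt)) + -(3*k3/(pt*pt*pt*pt)))*Real.sqrt (F pt)
          + (k2/(pt*pt) + k3/(pt*pt*pt))*(R'/(2*Real.sqrt (F pt))))) pt :=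
  hd_congr ((((((hasDerivAt_const pt c1).div (hasDerivAt_id' pt) hpt).const_add c0).add
    ((hasDerivAt_const pt c2).div ((hasDerivAt_id' pt).mul (hasDerivAt_id' pt))
      (mul_ne_zero hpt hpt))).add
    ((hasDerivAt_const pt c3).div (((hasDerivAt_id' pt).mul (hasDerivAt_id' pt)).mul
      (hasDerivAt_id' pt)) (mul_ne_zero (mul_ne_zero hpt hpt) hpt))).add
    ((((hasDerivAt_const pt k2).div ((hasDerivAt_id' pt).mul (hasDerivAt_id' pt))
        (mul_ne_zero hpt hpt)).add
      ((hasDerivAt_const pt k3).div (((hasDerivAt_id' pt).mul (hasDerivAt_id' pt)).mul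
        (hasDerivAt_id' pt)) (mul_ne_zero (mul_ne_zero hpt hpt) hpt))).mul
      (hF.sqrt h0))) (by simp only [Pi.mul_apply, Pi.div_apply, Pi.add_apply]; field_simp; ring)

set_option maxHeartbeats 400000000 in
/-- `(v₁,u₁,v₂,u₂)` are canonical separated variables for the
Kaup–Kupershmidt system on the open set where `y ≠ 0` and the radicand is positive. -/
theorem KK_separated_variables_canonical (a ω μ : ℝ) (ha : a ≠ 0)
    (px py x y : ℝ) (hy : y ≠ 0) (hrad : 0 < radKK a ω μ px py x y) :
    pbracket (u1KK a ω μ) (u2KK a ω μ) px py x y = 0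
    ∧ pbracket (v1KK a ω μ) (v2KK a ω μ) px py x y = 0
    ∧ pbracket (u1KK a ω μ) (v1KK a ω μ) px py x y = 1
    ∧ pbracket (u1KK a ω μ) (v2KK a ω μ) px py x y = 0
    ∧ pbracket (u2KK a ω μ) (v1KK a ω μ) px py x y = 0
    ∧ pbracket (u2KK a ω μ) (v2KK a ω μ) px py x y = 1 := by
  have hne : radKK a ω μ px py x y ≠ 0 := ne_of_gt hrad
  have hS0 : Real.sqrt (radKK a ω μ px py x y) ≠ 0 := Real.sqrt_ne_zero'.mpr hrad
  have hs2 : Real.sqrt (radKK a ω μ px py x y) ^ 2 = ((9:ℝ)*py^4 + (18:ℝ)*ω*py^2*y^2 + (9:ℝ)*ω^2*y^4 + (36:ℝ)*a*py^2*x*y^2 + (-12:ℝ)*a*px*py*y^3 + (-12:ℝ)*a*ω*x*y^4 + (-2:ℝ)*a^2*y^6 + (-12:ℝ)*a^2*x^2*y^4) := by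
    rw [Real.sq_sqrt hrad.le]; simp only [radKK, KKK]; field_simp; ring
  have hRq : HasDerivAt (fun t => radKK a ω μ t py x y) (((-12:ℝ)*a*py*y^3)) px := by
    have e : (fun t => radKK a ω μ t py x y) = (fun t => ((9:ℝ)*py^4 + (18:ℝ)*ω*py^2*y^2 + (9:ℝ)*ω^2*y^4 + (36:ℝ)*a*py^2*x*y^2 + (-12:ℝ)*a*ω*x*y^4 + (-2:ℝ)*a^2*y^6 + (-12:ℝ)*a^2*x^2*y^4) + ((-12:ℝ)*a*py*y^3)*t) := by
      funext t; simp only [radKK, KKK]; field_simp; ring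
    rw [e]; exact KKpoly1 ((9:ℝ)*py^4 + (18:ℝ)*ω*py^2*y^2 + (9:ℝ)*ω^2*y^4 + (36:ℝ)*a*py^2*x*y^2 + (-12:ℝ)*a*ω*x*y^4 + (-2:ℝ)*a^2*y^6 + (-12:ℝ)*a^2*x^2*y^4) ((-12:ℝ)*a*py*y^3) px
  have hRx : HasDerivAt (fun t => radKK a ω μ px py t y) (((36:ℝ)*a*py^2*y^2 + (-12:ℝ)*a*ω*y^4) + 2*((-12:ℝ)*a^2*y^4)*x) x := by
    have e : (fun t => radKK a ω μ px py t y) = (fun t => ((9:ℝ)*py^4 + (18:ℝ)*ω*py^2*y^2 + (9:ℝ)*ω^2*y^4 + (-12:ℝ)*a*px*py*y^3 + (-2:ℝ)*a^2*y^6) + ((36:ℝ)*a*py^2*y^2 + (-12:ℝ)*a*ω*y^4)*t + ((-12:ℝ)*a^2*y^4)*(t*t)) := by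
      funext t; simp only [radKK, KKK]; field_simp; ring
    rw [e]; exact KKpoly2 ((9:ℝ)*py^4 + (18:ℝ)*ω*py^2*y^2 + (9:ℝ)*ω^2*y^4 + (-12:ℝ)*a*px*py*y^3 + (-2:ℝ)*a^2*y^6) ((36:ℝ)*a*py^2*y^2 + (-12:ℝ)*a*ω*y^4) ((-12:ℝ)*a^2*y^4) x
  have hRp : HasDerivAt (fun t => radKK a ω μ px t x y) (((-12:ℝ)*a*px*y^3) + 2*((18:ℝ)*ω*y^2 + (36:ℝ)*a*x*y^2)*py + 4*((9:ℝ))*(py*py*py)) py := by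
    have e : (fun t => radKK a ω μ px t x y) = (fun t => ((9:ℝ)*ω^2*y^4 + (-12:ℝ)*a*ω*x*y^4 + (-2:ℝ)*a^2*y^6 + (-12:ℝ)*a^2*x^2*y^4) + ((-12:ℝ)*a*px*y^3)*t + ((18:ℝ)*ω*y^2 + (36:ℝ)*a*x*y^2)*(t*t) + ((9:ℝ))*(t*t*t*t)) := by
      funext t; simp only [radKK, KKK]; field_simp; ring
    rw [e]; exact KKpoly4 ((9:ℝ)*ω^2*y^4 + (-12:ℝ)*a*ω*x*y^4 + (-2:ℝ)*a^2*y^6 + (-12:ℝ)*a^2*x^2*y^4) ((-12:ℝ)*a*px*y^3) ((18:ℝ)*ω*y^2 + (36:ℝ)*a*x*y^2) ((9:ℝ)) py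
  have hRy : HasDerivAt (fun t => radKK a ω μ px py x t) (2*((18:ℝ)*ω*py^2 + (36:ℝ)*a*py^2*x)*y + 3*((-12:ℝ)*a*px*py)*(y*y) + 4*((9:ℝ)*ω^2 + (-12:ℝ)*a*ω*x + (-12:ℝ)*a^2*x^2)*(y*y*y) + 6*((-2:ℝ)*a^2)*(y*y*y*y*y)) y := by
    have hev : (fun t => radKK a ω μ px py x t) =ᶠ[nhds y] (fun t => ((9:ℝ)*py^4) + ((18:ℝ)*ω*py^2 + (36:ℝ)*a*py^2*x)*(t*t) + ((-12:ℝ)*a*px*py)*(t*t*t) + ((9:ℝ)*ω^2 + (-12:ℝ)*a*ω*x + (-12:ℝ)*a^2*x^2)*(t*t*t*t) + ((-2:ℝ)*a^2)*(t*t*t*t*t*t)) := by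
      filter_upwards [eventually_ne_nhds hy] with t ht
      simp only [radKK, KKK]; field_simp; ring
    exact HasDerivAt.congr_of_eventuallyEq (KKpoly6 ((9:ℝ)*py^4) ((18:ℝ)*ω*py^2 + (36:ℝ)*a*py^2*x) ((-12:ℝ)*a*px*py) ((9:ℝ)*ω^2 + (-12:ℝ)*a*ω*x + (-12:ℝ)*a^2*x^2) ((-2:ℝ)*a^2) y) hev
  have eu1q : (fun t => u1KK a ω μ t py x y) = (fun t => ((-3:ℝ)*py^2/(y^2) + (-2:ℝ)*a*x) + (0:ℝ)*t + ((1:ℝ)/(y^2))*Real.sqrt (radKK a ω μ t py x y)) := by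
    funext t; simp only [u1KK]; field_simp; ring
  have du1q : deriv (fun t => ((-3:ℝ)*py^2/(y^2) + (-2:ℝ)*a*x) + (0:ℝ)*t + ((1:ℝ)/(y^2))*Real.sqrt (radKK a ω μ t py x y)) px = (0:ℝ) + ((1:ℝ)/(y^2))*((((-12:ℝ)*a*py*y^3))/(2*Real.sqrt (radKK a ω μ px py x y))) :=
    (KKlin (fun t => radKK a ω μ t py x y) (((-12:ℝ)*a*py*y^3)) px ((-3:ℝ)*py^2/(y^2) + (-2:ℝ)*a*x) (0:ℝ) ((1:ℝ)/(y^2)) hRq hne).deriv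
  have eu1x : (fun t => u1KK a ω μ px py t y) = (fun t => ((-3:ℝ)*py^2/(y^2)) + ((-2:ℝ)*a)*t + ((1:ℝ)/(y^2))*Real.sqrt (radKK a ω μ px py t y)) := by
    funext t; simp only [u1KK]; field_simp; ring
  have du1x : deriv (fun t => ((-3:ℝ)*py^2/(y^2)) + ((-2:ℝ)*a)*t + ((1:ℝ)/(y^2))*Real.sqrt (radKK a ω μ px py t y)) x = ((-2:ℝ)*a) + ((1:ℝ)/(y^2))*((((36:ℝ)*a*py^2*y^2 + (-12:ℝ)*a*ω*y^4) + 2*((-12:ℝ)*a^2*y^4)*x)/(2*Real.sqrt (radKK a ω μ px py x y))) :=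
    (KKlin (fun t => radKK a ω μ px py t y) (((36:ℝ)*a*py^2*y^2 + (-12:ℝ)*a*ω*y^4) + 2*((-12:ℝ)*a^2*y^4)*x) x ((-3:ℝ)*py^2/(y^2)) ((-2:ℝ)*a) ((1:ℝ)/(y^2)) hRx hne).deriv
  have eu1p : (fun t => u1KK a ω μ px t x y) = (fun t => ((-2:ℝ)*a*x) + (0:ℝ)*t + ((-3:ℝ)/(y^2))*(t*t) + (0:ℝ)*(t*t*t) + (((1:ℝ)/(y^2)) + (0:ℝ)*t)*Real.sqrt (radKK a ω μ px t x y)) := by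
    funext t; simp only [u1KK]; field_simp; ring
  have du1p : deriv (fun t => ((-2:ℝ)*a*x) + (0:ℝ)*t + ((-3:ℝ)/(y^2))*(t*t) + (0:ℝ)*(t*t*t) + (((1:ℝ)/(y^2)) + (0:ℝ)*t)*Real.sqrt (radKK a ω μ px t x y)) py = (0:ℝ) + 2*((-3:ℝ)/(y^2))*py + 3*(0:ℝ)*(py*py) + ((0:ℝ)*Real.sqrt (radKK a ω μ px py x y) + (((1:ℝ)/(y^2)) + (0:ℝ)*py)*((((-12:ℝ)*a*px*y^3) + 2*((18:ℝ)*ω*y^2 + (36:ℝ)*a*x*y^2)*py + 4*((9:ℝ))*(py*py*py))/(2*Real.sqrt (radKK a ω μ px py x y)))) :=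
    (KKpy (fun t => radKK a ω μ px t x y) (((-12:ℝ)*a*px*y^3) + 2*((18:ℝ)*ω*y^2 + (36:ℝ)*a*x*y^2)*py + 4*((9:ℝ))*(py*py*py)) py ((-2:ℝ)*a*x) (0:ℝ) ((-3:ℝ)/(y^2)) (0:ℝ) ((1:ℝ)/(y^2)) (0:ℝ) hRp hne).deriv
  have du1y : deriv (fun t => u1KK a ω μ px py x t) y = -((0:ℝ)/(y*y)) + -(2*((-3:ℝ)*py^2)/(y*y*y)) + -(3*(0:ℝ)/(y*y*y*y)) + ((-(2*((1:ℝ))/(y*y*y)) + -(3*(0:ℝ)/(y*y*y*y)))*Real.sqrt (radKK a ω μ px py x y) + (((1:ℝ))/(y*y) + (0:ℝ)/(y*y*y))*((2*((18:ℝ)*ω*py^2 + (36:ℝ)*a*py^2*x)*y + 3*((-12:ℝ)*a*px*py)*(y*y) + 4*((9:ℝ)*ω^2 + (-12:ℝ)*a*ω*x + (-12:ℝ)*a^2*x^2)*(y*y*y) + 6*((-2:ℝ)*a^2)*(y*y*y*y*y))/(2*Real.sqrt (radKK a ω μ px py x y)))) := by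
    have hev : (fun t => u1KK a ω μ px py x t) =ᶠ[nhds y] (fun t => ((-2:ℝ)*a*x) + (0:ℝ)/t + ((-3:ℝ)*py^2)/(t*t) + (0:ℝ)/(t*t*t) + (((1:ℝ))/(t*t) + (0:ℝ)/(t*t*t))*Real.sqrt (radKK a ω μ px py x t)) := by
      filter_upwards [eventually_ne_nhds hy] with t ht
      simp only [u1KK]; field_simp; ring
    exact (HasDerivAt.congr_of_eventuallyEq (KKy (fun t => radKK a ω μ px py x t) (2*((18:ℝ)*ω*py^2 + (36:ℝ)*a*py^2*x)*y + 3*((-12:ℝ)*a*px*py)*(y*y) + 4*((9:ℝ)*ω^2 + (-12:ℝ)*a*ω*x + (-12:ℝ)*a^2*x^2)*(y*y*y) + 6*((-2:ℝ)*a^2)*(y*y*y*y*y)) y ((-2:ℝ)*a*x) (0:ℝ) ((-3:ℝ)*py^2) (0:ℝ) ((1:ℝ)) (0:ℝ) hRy hne hS0 hy) hev).deriv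
  have eu2q : (fun t => u2KK a ω μ t py x y) = (fun t => ((-3:ℝ)*py^2/(y^2) + (-2:ℝ)*a*x) + (0:ℝ)*t + ((-1:ℝ)/(y^2))*Real.sqrt (radKK a ω μ t py x y)) := by
    funext t; simp only [u2KK]; field_simp; ring
  have du2q : deriv (fun t => ((-3:ℝ)*py^2/(y^2) + (-2:ℝ)*a*x) + (0:ℝ)*t + ((-1:ℝ)/(y^2))*Real.sqrt (radKK a ω μ t py x y)) px = (0:ℝ) + ((-1:ℝ)/(y^2))*((((-12:ℝ)*a*py*y^3))/(2*Real.sqrt (radKK a ω μ px py x y))) :=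
    (KKlin (fun t => radKK a ω μ t py x y) (((-12:ℝ)*a*py*y^3)) px ((-3:ℝ)*py^2/(y^2) + (-2:ℝ)*a*x) (0:ℝ) ((-1:ℝ)/(y^2)) hRq hne).deriv
  have eu2x : (fun t => u2KK a ω μ px py t y) = (fun t => ((-3:ℝ)*py^2/(y^2)) + ((-2:ℝ)*a)*t + ((-1:ℝ)/(y^2))*Real.sqrt (radKK a ω μ px py t y)) := by
    funext t; simp only [u2KK]; field_simp; ring
  have du2x : deriv (fun t => ((-3:ℝ)*py^2/(y^2)) + ((-2:ℝ)*a)*t + ((-1:ℝ)/(y^2))*Real.sqrt (radKK a ω μ px py t y)) x = ((-2:ℝ)*a) + ((-1:ℝ)/(y^2))*((((36:ℝ)*a*py^2*y^2 + (-12:ℝ)*a*ω*y^4) + 2*((-12:ℝ)*a^2*y^4)*x)/(2*Real.sqrt (radKK a ω μ px py x y))) :=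
    (KKlin (fun t => radKK a ω μ px py t y) (((36:ℝ)*a*py^2*y^2 + (-12:ℝ)*a*ω*y^4) + 2*((-12:ℝ)*a^2*y^4)*x) x ((-3:ℝ)*py^2/(y^2)) ((-2:ℝ)*a) ((-1:ℝ)/(y^2)) hRx hne).deriv
  have eu2p : (fun t => u2KK a ω μ px t x y) = (fun t => ((-2:ℝ)*a*x) + (0:ℝ)*t + ((-3:ℝ)/(y^2))*(t*t) + (0:ℝ)*(t*t*t) + (((-1:ℝ)/(y^2)) + (0:ℝ)*t)*Real.sqrt (radKK a ω μ px t x y)) := by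
    funext t; simp only [u2KK]; field_simp; ring
  have du2p : deriv (fun t => ((-2:ℝ)*a*x) + (0:ℝ)*t + ((-3:ℝ)/(y^2))*(t*t) + (0:ℝ)*(t*t*t) + (((-1:ℝ)/(y^2)) + (0:ℝ)*t)*Real.sqrt (radKK a ω μ px t x y)) py = (0:ℝ) + 2*((-3:ℝ)/(y^2))*py + 3*(0:ℝ)*(py*py) + ((0:ℝ)*Real.sqrt (radKK a ω μ px py x y) + (((-1:ℝ)/(y^2)) + (0:ℝ)*py)*((((-12:ℝ)*a*px*y^3) + 2*((18:ℝ)*ω*y^2 + (36:ℝ)*a*x*y^2)*py + 4*((9:ℝ))*(py*py*py))/(2*Real.sqrt (radKK a ω μ px py x y)))) :=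
    (KKpy (fun t => radKK a ω μ px t x y) (((-12:ℝ)*a*px*y^3) + 2*((18:ℝ)*ω*y^2 + (36:ℝ)*a*x*y^2)*py + 4*((9:ℝ))*(py*py*py)) py ((-2:ℝ)*a*x) (0:ℝ) ((-3:ℝ)/(y^2)) (0:ℝ) ((-1:ℝ)/(y^2)) (0:ℝ) hRp hne).deriv
  have du2y : deriv (fun t => u2KK a ω μ px py x t) y = -((0:ℝ)/(y*y)) + -(2*((-3:ℝ)*py^2)/(y*y*y)) + -(3*(0:ℝ)/(y*y*y*y)) + ((-(2*((-1:ℝ))/(y*y*y)) + -(3*(0:ℝ)/(y*y*y*y)))*Real.sqrt (radKK a ω μ px py x y) + (((-1:ℝ))/(y*y) + (0:ℝ)/(y*y*y))*((2*((18:ℝ)*ω*py^2 + (36:ℝ)*a*py^2*x)*y + 3*((-12:ℝ)*a*px*py)*(y*y) + 4*((9:ℝ)*ω^2 + (-12:ℝ)*a*ω*x + (-12:ℝ)*a^2*x^2)*(y*y*y) + 6*((-2:ℝ)*a^2)*(y*y*y*y*y))/(2*Real.sqrt (radKK a ω μ px py x y)))) := by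
    have hev : (fun t => u2KK a ω μ px py x t) =ᶠ[nhds y] (fun t => ((-2:ℝ)*a*x) + (0:ℝ)/t + ((-3:ℝ)*py^2)/(t*t) + (0:ℝ)/(t*t*t) + (((-1:ℝ))/(t*t) + (0:ℝ)/(t*t*t))*Real.sqrt (radKK a ω μ px py x t)) := by
      filter_upwards [eventually_ne_nhds hy] with t ht
      simp only [u2KK]; field_simp; ring
    exact (HasDerivAt.congr_of_eventuallyEq (KKy (fun t => radKK a ω μ px py x t) (2*((18:ℝ)*ω*py^2 + (36:ℝ)*a*py^2*x)*y + 3*((-12:ℝ)*a*px*py)*(y*y) + 4*((9:ℝ)*ω^2 + (-12:ℝ)*a*ω*x + (-12:ℝ)*a^2*x^2)*(y*y*y) + 6*((-2:ℝ)*a^2)*(y*y*y*y*y)) y ((-2:ℝ)*a*x) (0:ℝ) ((-3:ℝ)*py^2) (0:ℝ) ((-1:ℝ)) (0:ℝ) hRy hne hS0 hy) hev).deriv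
  have ev1q : (fun t => v1KK a ω μ t py x y) = (fun t => ((3:ℝ)*py^3/(4*a^2*y^3) + (3:ℝ)*ω*py/(4*a^2*y) + (3:ℝ)*py*x/(2*a*y)) + ((-1:ℝ)/(4*a))*t + ((-1:ℝ)*py/(4*a^2*y^3))*Real.sqrt (radKK a ω μ t py x y)) := by
    funext t; simp only [v1KK, u1KK]; field_simp; ring
  have dv1q : deriv (fun t => ((3:ℝ)*py^3/(4*a^2*y^3) + (3:ℝ)*ω*py/(4*a^2*y) + (3:ℝ)*py*x/(2*a*y)) + ((-1:ℝ)/(4*a))*t + ((-1:ℝ)*py/(4*a^2*y^3))*Real.sqrt (radKK a ω μ t py x y)) px = ((-1:ℝ)/(4*a)) + ((-1:ℝ)*py/(4*a^2*y^3))*((((-12:ℝ)*a*py*y^3))/(2*Real.sqrt (radKK a ω μ px py x y))) :=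
    (KKlin (fun t => radKK a ω μ t py x y) (((-12:ℝ)*a*py*y^3)) px ((3:ℝ)*py^3/(4*a^2*y^3) + (3:ℝ)*ω*py/(4*a^2*y) + (3:ℝ)*py*x/(2*a*y)) ((-1:ℝ)/(4*a)) ((-1:ℝ)*py/(4*a^2*y^3)) hRq hne).deriv
  have ev1x : (fun t => v1KK a ω μ px py t y) = (fun t => ((3:ℝ)*py^3/(4*a^2*y^3) + (3:ℝ)*ω*py/(4*a^2*y) + (-1:ℝ)*px/(4*a)) + ((3:ℝ)*py/(2*a*y))*t + ((-1:ℝ)*py/(4*a^2*y^3))*Real.sqrt (radKK a ω μ px py t y)) := by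
    funext t; simp only [v1KK, u1KK]; field_simp; ring
  have dv1x : deriv (fun t => ((3:ℝ)*py^3/(4*a^2*y^3) + (3:ℝ)*ω*py/(4*a^2*y) + (-1:ℝ)*px/(4*a)) + ((3:ℝ)*py/(2*a*y))*t + ((-1:ℝ)*py/(4*a^2*y^3))*Real.sqrt (radKK a ω μ px py t y)) x = ((3:ℝ)*py/(2*a*y)) + ((-1:ℝ)*py/(4*a^2*y^3))*((((36:ℝ)*a*py^2*y^2 + (-12:ℝ)*a*ω*y^4) + 2*((-12:ℝ)*a^2*y^4)*x)/(2*Real.sqrt (radKK a ω μ px py x y))) :=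
    (KKlin (fun t => radKK a ω μ px py t y) (((36:ℝ)*a*py^2*y^2 + (-12:ℝ)*a*ω*y^4) + 2*((-12:ℝ)*a^2*y^4)*x) x ((3:ℝ)*py^3/(4*a^2*y^3) + (3:ℝ)*ω*py/(4*a^2*y) + (-1:ℝ)*px/(4*a)) ((3:ℝ)*py/(2*a*y)) ((-1:ℝ)*py/(4*a^2*y^3)) hRx hne).deriv
  have ev1p : (fun t => v1KK a ω μ px t x y) = (fun t => ((-1:ℝ)*px/(4*a)) + ((3:ℝ)*ω/(4*a^2*y) + (3:ℝ)*x/(2*a*y))*t + (0:ℝ)*(t*t) + ((3:ℝ)/(4*a^2*y^3))*(t*t*t) + ((0:ℝ) + ((-1:ℝ)/(4*a^2*y^3))*t)*Real.sqrt (radKK a ω μ px t x y)) := by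
    funext t; simp only [v1KK, u1KK]; field_simp; ring
  have dv1p : deriv (fun t => ((-1:ℝ)*px/(4*a)) + ((3:ℝ)*ω/(4*a^2*y) + (3:ℝ)*x/(2*a*y))*t + (0:ℝ)*(t*t) + ((3:ℝ)/(4*a^2*y^3))*(t*t*t) + ((0:ℝ) + ((-1:ℝ)/(4*a^2*y^3))*t)*Real.sqrt (radKK a ω μ px t x y)) py = ((3:ℝ)*ω/(4*a^2*y) + (3:ℝ)*x/(2*a*y)) + 2*(0:ℝ)*py + 3*((3:ℝ)/(4*a^2*y^3))*(py*py) + (((-1:ℝ)/(4*a^2*y^3))*Real.sqrt (radKK a ω μ px py x y) + ((0:ℝ) + ((-1:ℝ)/(4*a^2*y^3))*py)*((((-12:ℝ)*a*px*y^3) + 2*((18:ℝ)*ω*y^2 + (36:ℝ)*a*x*y^2)*py + 4*((9:ℝ))*(py*py*py))/(2*Real.sqrt (radKK a ω μ px py x y)))) :=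
    (KKpy (fun t => radKK a ω μ px t x y) (((-12:ℝ)*a*px*y^3) + 2*((18:ℝ)*ω*y^2 + (36:ℝ)*a*x*y^2)*py + 4*((9:ℝ))*(py*py*py)) py ((-1:ℝ)*px/(4*a)) ((3:ℝ)*ω/(4*a^2*y) + (3:ℝ)*x/(2*a*y)) (0:ℝ) ((3:ℝ)/(4*a^2*y^3)) (0:ℝ) ((-1:ℝ)/(4*a^2*y^3)) hRp hne).deriv
  have dv1y : deriv (fun t => v1KK a ω μ px py x t) y = -(((3:ℝ)*ω*py/(4*a^2) + (3:ℝ)*py*x/(2*a))/(y*y)) + -(2*(0:ℝ)/(y*y*y)) + -(3*((3:ℝ)*py^3/(4*a^2))/(y*y*y*y)) + ((-(2*(0:ℝ)/(y*y*y)) + -(3*((-1:ℝ)*py/(4*a^2))/(y*y*y*y)))*Real.sqrt (radKK a ω μ px py x y) + ((0:ℝ)/(y*y) + ((-1:ℝ)*py/(4*a^2))/(y*y*y))*((2*((18:ℝ)*ω*py^2 + (36:ℝ)*a*py^2*x)*y + 3*((-12:ℝ)*a*px*py)*(y*y) + 4*((9:ℝ)*ω^2 + (-12:ℝ)*a*ω*x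 + (-12:ℝ)*a^2*x^2)*(y*y*y) + 6*((-2:ℝ)*a^2)*(y*y*y*y*y))/(2*Real.sqrt (radKK a ω μ px py x y)))) := by
    have hev : (fun t => v1KK a ω μ px py x t) =ᶠ[nhds y] (fun t => ((-1:ℝ)*px/(4*a)) + ((3:ℝ)*ω*py/(4*a^2) + (3:ℝ)*py*x/(2*a))/t + (0:ℝ)/(t*t) + ((3:ℝ)*py^3/(4*a^2))/(t*t*t) + ((0:ℝ)/(t*t) + ((-1:ℝ)*py/(4*a^2))/(t*t*t))*Real.sqrt (radKK a ω μ px py x t)) := by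
      filter_upwards [eventually_ne_nhds hy] with t ht
      simp only [v1KK, u1KK]; field_simp; ring
    exact (HasDerivAt.congr_of_eventuallyEq (KKy (fun t => radKK a ω μ px py x t) (2*((18:ℝ)*ω*py^2 + (36:ℝ)*a*py^2*x)*y + 3*((-12:ℝ)*a*px*py)*(y*y) + 4*((9:ℝ)*ω^2 + (-12:ℝ)*a*ω*x + (-12:ℝ)*a^2*x^2)*(y*y*y) + 6*((-2:ℝ)*a^2)*(y*y*y*y*y)) y ((-1:ℝ)*px/(4*a)) ((3:ℝ)*ω*py/(4*a^2) + (3:ℝ)*py*x/(2*a)) (0:ℝ) ((3:ℝ)*py^3/(4*a^2)) (0:ℝ) ((-1:ℝ)*py/(4*a^2)) hRy hne hS0 hy) hev).deriv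
  have ev2q : (fun t => v2KK a ω μ t py x y) = (fun t => ((3:ℝ)*py^3/(4*a^2*y^3) + (3:ℝ)*ω*py/(4*a^2*y) + (3:ℝ)*py*x/(2*a*y)) + ((-1:ℝ)/(4*a))*t + ((1:ℝ)*py/(4*a^2*y^3))*Real.sqrt (radKK a ω μ t py x y)) := by
    funext t; simp only [v2KK, u2KK]; field_simp; ring
  have dv2q : deriv (fun t => ((3:ℝ)*py^3/(4*a^2*y^3) + (3:ℝ)*ω*py/(4*a^2*y) + (3:ℝ)*py*x/(2*a*y)) + ((-1:ℝ)/(4*a))*t + ((1:ℝ)*py/(4*a^2*y^3))*Real.sqrt (radKK a ω μ t py x y)) px = ((-1:ℝ)/(4*a)) + ((1:ℝ)*py/(4*a^2*y^3))*((((-12:ℝ)*a*py*y^3))/(2*Real.sqrt (radKK a ω μ px py x y))) :=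
    (KKlin (fun t => radKK a ω μ t py x y) (((-12:ℝ)*a*py*y^3)) px ((3:ℝ)*py^3/(4*a^2*y^3) + (3:ℝ)*ω*py/(4*a^2*y) + (3:ℝ)*py*x/(2*a*y)) ((-1:ℝ)/(4*a)) ((1:ℝ)*py/(4*a^2*y^3)) hRq hne).deriv
  have ev2x : (fun t => v2KK a ω μ px py t y) = (fun t => ((3:ℝ)*py^3/(4*a^2*y^3) + (3:ℝ)*ω*py/(4*a^2*y) + (-1:ℝ)*px/(4*a)) + ((3:ℝ)*py/(2*a*y))*t + ((1:ℝ)*py/(4*a^2*y^3))*Real.sqrt (radKK a ω μ px py t y)) := by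
    funext t; simp only [v2KK, u2KK]; field_simp; ring
  have dv2x : deriv (fun t => ((3:ℝ)*py^3/(4*a^2*y^3) + (3:ℝ)*ω*py/(4*a^2*y) + (-1:ℝ)*px/(4*a)) + ((3:ℝ)*py/(2*a*y))*t + ((1:ℝ)*py/(4*a^2*y^3))*Real.sqrt (radKK a ω μ px py t y)) x = ((3:ℝ)*py/(2*a*y)) + ((1:ℝ)*py/(4*a^2*y^3))*((((36:ℝ)*a*py^2*y^2 + (-12:ℝ)*a*ω*y^4) + 2*((-12:ℝ)*a^2*y^4)*x)/(2*Real.sqrt (radKK a ω μ px py x y))) :=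
    (KKlin (fun t => radKK a ω μ px py t y) (((36:ℝ)*a*py^2*y^2 + (-12:ℝ)*a*ω*y^4) + 2*((-12:ℝ)*a^2*y^4)*x) x ((3:ℝ)*py^3/(4*a^2*y^3) + (3:ℝ)*ω*py/(4*a^2*y) + (-1:ℝ)*px/(4*a)) ((3:ℝ)*py/(2*a*y)) ((1:ℝ)*py/(4*a^2*y^3)) hRx hne).deriv
  have ev2p : (fun t => v2KK a ω μ px t x y) = (fun t => ((-1:ℝ)*px/(4*a)) + ((3:ℝ)*ω/(4*a^2*y) + (3:ℝ)*x/(2*a*y))*t + (0:ℝ)*(t*t) + ((3:ℝ)/(4*a^2*y^3))*(t*t*t) + ((0:ℝ) + ((1:ℝ)/(4*a^2*y^3))*t)*Real.sqrt (radKK a ω μ px t x y)) := by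
    funext t; simp only [v2KK, u2KK]; field_simp; ring
  have dv2p : deriv (fun t => ((-1:ℝ)*px/(4*a)) + ((3:ℝ)*ω/(4*a^2*y) + (3:ℝ)*x/(2*a*y))*t + (0:ℝ)*(t*t) + ((3:ℝ)/(4*a^2*y^3))*(t*t*t) + ((0:ℝ) + ((1:ℝ)/(4*a^2*y^3))*t)*Real.sqrt (radKK a ω μ px t x y)) py = ((3:ℝ)*ω/(4*a^2*y) + (3:ℝ)*x/(2*a*y)) + 2*(0:ℝ)*py + 3*((3:ℝ)/(4*a^2*y^3))*(py*py) + (((1:ℝ)/(4*a^2*y^3))*Real.sqrt (radKK a ω μ px py x y) + ((0:ℝ) + ((1:ℝ)/(4*a^2*y^3))*py)*((((-12:ℝ)*a*px*y^3) + 2*((18:ℝ)*ω*y^2 + (36:ℝ)*a*x*y^2)*py + 4*((9:ℝ))*(py*py*py))/(2*Real.sqrt (radKK a ω μ px py x y)))) :=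
    (KKpy (fun t => radKK a ω μ px t x y) (((-12:ℝ)*a*px*y^3) + 2*((18:ℝ)*ω*y^2 + (36:ℝ)*a*x*y^2)*py + 4*((9:ℝ))*(py*py*py)) py ((-1:ℝ)*px/(4*a)) ((3:ℝ)*ω/(4*a^2*y) + (3:ℝ)*x/(2*a*y)) (0:ℝ) ((3:ℝ)/(4*a^2*y^3)) (0:ℝ) ((1:ℝ)/(4*a^2*y^3)) hRp hne).deriv
  have dv2y : deriv (fun t => v2KK a ω μ px py x t) y = -(((3:ℝ)*ω*py/(4*a^2) + (3:ℝ)*py*x/(2*a))/(y*y)) + -(2*(0:ℝ)/(y*y*y)) + -(3*((3:ℝ)*py^3/(4*a^2))/(y*y*y*y)) + ((-(2*(0:ℝ)/(y*y*y)) + -(3*((1:ℝ)*py/(4*a^2))/(y*y*y*y)))*Real.sqrt (radKK a ω μ px py x y) + ((0:ℝ)/(y*y) + ((1:ℝ)*py/(4*a^2))/(y*y*y))*((2*((18:ℝ)*ω*py^2 + (36:ℝ)*a*py^2*x)*y + 3*((-12:ℝ)*a*px*py)*(y*y) + 4*((9:ℝ)*ω^2 + (-12:ℝ)*a*ω*x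 + (-12:ℝ)*a^2*x^2)*(y*y*y) + 6*((-2:ℝ)*a^2)*(y*y*y*y*y))/(2*Real.sqrt (radKK a ω μ px py x y)))) := by
    have hev : (fun t => v2KK a ω μ px py x t) =ᶠ[nhds y] (fun t => ((-1:ℝ)*px/(4*a)) + ((3:ℝ)*ω*py/(4*a^2) + (3:ℝ)*py*x/(2*a))/t + (0:ℝ)/(t*t) + ((3:ℝ)*py^3/(4*a^2))/(t*t*t) + ((0:ℝ)/(t*t) + ((1:ℝ)*py/(4*a^2))/(t*t*t))*Real.sqrt (radKK a ω μ px py x t)) := by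
      filter_upwards [eventually_ne_nhds hy] with t ht
      simp only [v2KK, u2KK]; field_simp; ring
    exact (HasDerivAt.congr_of_eventuallyEq (KKy (fun t => radKK a ω μ px py x t) (2*((18:ℝ)*ω*py^2 + (36:ℝ)*a*py^2*x)*y + 3*((-12:ℝ)*a*px*py)*(y*y) + 4*((9:ℝ)*ω^2 + (-12:ℝ)*a*ω*x + (-12:ℝ)*a^2*x^2)*(y*y*y) + 6*((-2:ℝ)*a^2)*(y*y*y*y*y)) y ((-1:ℝ)*px/(4*a)) ((3:ℝ)*ω*py/(4*a^2) + (3:ℝ)*py*x/(2*a)) (0:ℝ) ((3:ℝ)*py^3/(4*a^2)) (0:ℝ) ((1:ℝ)*py/(4*a^2)) hRy hne hS0 hy) hev).deriv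
  refine ⟨?_, ?_, ?_, ?_, ?_, ?_⟩
  · unfold pbracket
    rw [eu1x, eu2q, eu1q, eu2x, eu2p, eu1p]
    rw [du1x, du2q, du1q, du2x, du1y, du2p, du1p, du2y]
    generalize hS : Real.sqrt (radKK a ω μ px py x y) = S at hs2 hS0 ⊢
    linear_combination (norm := (field_simp [ha, hy, hS0]; ring1)) (((24:ℝ)*py/(y^5*S))) * hs2
  · unfold pbracket
    rw [ev1x, ev2q, ev1q, ev2x, ev2p, ev1p]
    rw [dv1x, dv2q, dv1q, dv2x, dv1y, dv2p, dv1p, dv2y]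
    generalize hS : Real.sqrt (radKK a ω μ px py x y) = S at hs2 hS0 ⊢
    linear_combination (norm := (field_simp [ha, hy, hS0]; ring1)) (((9:ℝ)*py^3/(4*a^4*y^7*S) + (3:ℝ)*ω*py/(4*a^4*y^5*S) + (3:ℝ)*py*x/(2*a^3*y^5*S))) * hs2
  · unfold pbracket
    rw [eu1x, ev1q, eu1q, ev1x, ev1p, eu1p]
    rw [du1x, dv1q, du1q, dv1x, du1y, dv1p, du1p, dv1y]
    generalize hS : Real.sqrt (radKK a ω μ px py x y) = S at hs2 hS0 ⊢
    linear_combination (norm := (field_simp [ha, hy, hS0]; ring1)) (((1:ℝ)/(2*a^2*y^6) + (-3:ℝ)*py^2/(2*a^2*y^6*S) + (-3:ℝ)*ω/(2*a^2*y^4*S) + (-3:ℝ)*x/(a*y^4*S))) * hs2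
  · unfold pbracket
    rw [eu1x, ev2q, eu1q, ev2x, ev2p, eu1p]
    rw [du1x, dv2q, du1q, dv2x, du1y, dv2p, du1p, dv2y]
    generalize hS : Real.sqrt (radKK a ω μ px py x y) = S at hs2 hS0 ⊢
    linear_combination (norm := (field_simp [ha, hy, hS0]; ring1)) (((-1:ℝ)/(2*a^2*y^6) + (-15:ℝ)*py^2/(2*a^2*y^6*S) + (-3:ℝ)*ω/(2*a^2*y^4*S) + (-3:ℝ)*x/(a*y^4*S))) * hs2
  · unfold pbracket
    rw [eu2x, ev1q, eu2q, ev1x, ev1p, eu2p]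
    rw [du2x, dv1q, du2q, dv1x, du2y, dv1p, du2p, dv1y]
    generalize hS : Real.sqrt (radKK a ω μ px py x y) = S at hs2 hS0 ⊢
    linear_combination (norm := (field_simp [ha, hy, hS0]; ring1)) (((-1:ℝ)/(2*a^2*y^6) + (15:ℝ)*py^2/(2*a^2*y^6*S) + (3:ℝ)*ω/(2*a^2*y^4*S) + (3:ℝ)*x/(a*y^4*S))) * hs2
  · unfold pbracket
    rw [eu2x, ev2q, eu2q, ev2x, ev2p, eu2p]
    rw [du2x, dv2q, du2q, dv2x, du2y, dv2p, du2p, dv2y]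
    generalize hS : Real.sqrt (radKK a ω μ px py x y) = S at hs2 hS0 ⊢
    linear_combination (norm := (field_simp [ha, hy, hS0]; ring1)) (((1:ℝ)/(2*a^2*y^6) + (3:ℝ)*py^2/(2*a^2*y^6*S) + (3:ℝ)*ω/(2*a^2*y^4*S) + (3:ℝ)*x/(a*y^4*S))) * hs2
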